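/- Let p be a prime, n ≥ 1, Γ a complete set of representatives of ℤ^n/pℤ^n containing 0 with Γ' = Γ \ {0}, and F_p a complete set of representatives of ℤ/pℤ containing 0 with F_p' = F_p \ {0}. For l ∈ F_p' and ν ∈ Γ', let η(l,ν) be the unique element of Γ' with η(l,ν) ≡ ρ(l)ν (mod pℤ^n), where ρ(l) ∈ F_p' is the unique element with l·ρ(l) ≡ 1 (mod pℤ). Let H : ℤ → ℝ be a finitely supported 1-D lowpass filter with dilation p, and let h : ℤ^n → ℝ be the n-D lowpass filter whose mask is the prime coset sum C_{n,p}[Ĥ]. Then for every ν ∈ Γ' and ω ∈ ℝ^n: (h(ν+p·))^(pω) = (1/((p−1)p^{n−1})) Σ_{l∈F_p'} e^{iω·(ν − η(l,ν)l)} (H(l+p·))^(pω·η(l,ν)), where (h(ν+p·))^(ξ) := p^{-n} Σ_{k∈ℤ^n} h(ν+pk) e^{-ik·ξ} for ξ ∈ ℝ^n and (H(l+p·))^(ζ) := p^{-1} Σ_{m∈ℤ} H(l+pm) e^{-imζ} for ζ ∈ ℝ. -/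

import Mathlib

open scoped Real Classical

noncomputable section

/-- `eC x = e^{-ix}` as a complex number. -/
def eC (x : ℝ) : ℂ := Complex.exp (-(Complex.I * (x : ℂ)))

/-- `epC x = e^{ix}` as a complex number. -/
def epC (x : ℝ) : ℂ := Complex.exp (Complex.I * (x : ℂ))

lemma eC_add (x y : ℝ) : eC (x + y) = eC x * eC y := by
  rw [eC, eC, eC, ← Complex.exp_add]
  congr 1; push_cast; ring

lemma epC_mul_eC (x y : ℝ) : epC x * eC y = eC (y - x) := by
  rw [eC, epC, eC, ← Complex.exp_add]
  congr 1; push_cast; ring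

lemma epC_eq (x : ℝ) : epC x = eC (-x) := by
  rw [eC, epC]; congr 1; push_cast; ring

lemma eC_sum {ι : Type*} (s : Finset ι) (f : ι → ℝ) :
    eC (∑ i ∈ s, f i) = ∏ i ∈ s, eC (f i) := by
  classical
  induction s using Finset.induction with
  | empty => simp [eC]
  | insert _ _ h ih => rw [Finset.sum_insert h, Finset.prod_insert h, eC_add, ih]

lemma eC_int2pi (m : ℤ) : eC (2*Real.pi*m) = 1 := by
  rw [eC]
  have := Complex.exp_int_mul_two_pi_mul_I (-m)
  rw [← this]; congr 1; push_cast; ring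

lemma eC_period (x : ℝ) (m : ℤ) : eC (x + 2*Real.pi*m) = eC x := by
  rw [eC_add, eC_int2pi, mul_one]

lemma char1 (p : ℕ) (hp : 0 < p) (d : ℤ) :
    ∑ j ∈ Finset.range p, eC (2*Real.pi*d*j/p) = if (p:ℤ) ∣ d then (p:ℂ) else 0 := by
  have hp0 : (p:ℝ) ≠ 0 := by exact_mod_cast hp.ne'
  set z : ℂ := eC (2*Real.pi*d/p) with hz
  have hzj : ∀ j : ℕ, eC (2*Real.pi*d*j/p) = z ^ j := by
    intro j
    rw [hz, eC, eC, ← Complex.exp_nat_mul]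
    congr 1; push_cast; ring
  rw [Finset.sum_congr rfl (fun j _ => hzj j)]
  by_cases hd : (p:ℤ) ∣ d
  · obtain ⟨e, he⟩ := id hd
    have hz1 : z = 1 := by
      have : (2*Real.pi*d/p : ℝ) = 2*Real.pi*e := by
        rw [he]; push_cast; field_simp
      rw [hz, this, eC_int2pi]
    rw [Finset.sum_congr rfl (fun j _ => by rw [hz1, one_pow]), if_pos hd]
    simp
  · have hz1 : z ≠ 1 := by
      intro hz1
      rw [hz, eC, Complex.exp_eq_one_iff] at hz1
      obtain ⟨m, hm⟩ := hz1
      have hc : ((2*Real.pi*d/p : ℝ) : ℂ) = ((-m * (2*Real.pi) : ℝ) : ℂ) := by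
        apply mul_left_cancel₀ Complex.I_ne_zero
        push_cast at hm ⊢
        linear_combination -hm
      have h2 : (2*Real.pi*d/p : ℝ) = -m * (2*Real.pi) := by exact_mod_cast hc
      have h4 : (2*Real.pi) * (d:ℝ) = (2*Real.pi) * ((-m*p : ℤ):ℝ) := by
        field_simp at h2
        push_cast
        linear_combination (2*Real.pi) * h2
      have h5 : (d:ℝ) = ((-m*p : ℤ):ℝ) := mul_left_cancel₀ (by positivity) h4
      have h6 : d = -m*p := by exact_mod_cast h5
      exact hd ⟨-m, by rw [h6]; ring⟩
    have hzp : z ^ p = 1 := by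
      rw [← hzj p]
      have : (2*Real.pi*d*p/p : ℝ) = 2*Real.pi*d := by field_simp
      rw [this, eC_int2pi d]
    rw [geom_sum_eq hz1, hzp]
    simp [hd]

lemma eC_div_period (p : ℕ) (hp : 0 < p) (d a b : ℤ) (h : (p:ℤ) ∣ (a - b)) :
    eC (2*Real.pi*d*a/p) = eC (2*Real.pi*d*b/p) := by
  obtain ⟨c, hc⟩ := h
  have hp0 : (p:ℝ) ≠ 0 := by exact_mod_cast hp.ne'
  have ha : (a : ℝ) = b + p * c := by
    have : a = b + p * c := by linarith [hc]
    exact_mod_cast this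
  have : (2*Real.pi*d*a/p : ℝ) = 2*Real.pi*d*b/p + 2*Real.pi*(d*c : ℤ) := by
    rw [ha]; push_cast; field_simp
  rw [this, eC_period]

lemma charZMod (p : ℕ) (hp : 0 < p) (d : ℤ) :
    haveI : NeZero p := ⟨hp.ne'⟩
    ∑ x : ZMod p, eC (2*Real.pi*d*((x.val : ℤ))/p) = if (p:ℤ) ∣ d then (p:ℂ) else 0 := by
  haveI : NeZero p := ⟨hp.ne'⟩
  rw [← char1 p hp d]
  apply Finset.sum_nbij' (fun x => ZMod.val x) (fun j => (j : ZMod p))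
  · intro x _; exact Finset.mem_range.2 (ZMod.val_lt x)
  · intro j _; exact Finset.mem_univ _
  · intro x _; exact ZMod.natCast_rightInverse x
  · intro j hj; exact ZMod.val_cast_of_lt (Finset.mem_range.1 hj)
  · intro x _; rfl

lemma val_congr (p : ℕ) [NeZero p] (a : ℤ) : (p:ℤ) ∣ a - (((a : ZMod p)).val : ℤ) := by
  rw [← ZMod.intCast_zmod_eq_zero_iff_dvd]
  push_cast
  simp [ZMod.natCast_val, ZMod.intCast_cast]

lemma charGamma (n p : ℕ) (hp : 0 < p)
    (Γ : Finset (Fin n → ℤ))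
    (hΓ : ∀ k : Fin n → ℤ, ∃! ν : Fin n → ℤ, ν ∈ Γ ∧ ∃ m : Fin n → ℤ, k = ν + (p:ℤ) • m)
    (d : Fin n → ℤ) :
    ∑ γ ∈ Γ, eC (∑ i, 2*Real.pi*(d i)*(γ i)/p)
      = if (∀ i, (p:ℤ) ∣ d i) then ((p:ℂ))^n else 0 := by
  haveI : NeZero p := ⟨hp.ne'⟩
  have hmk : ∀ a b : ℤ, (p:ℤ) ∣ b - a → ∃ c : ℤ, b = a + (p:ℤ) * c := by
    intro a b hab
    obtain ⟨c, hc⟩ := hab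
    exact ⟨c, by linarith⟩
  have step1 : ∑ γ ∈ Γ, eC (∑ i, 2*Real.pi*(d i)*(γ i)/p)
      = ∑ x : (Fin n → ZMod p), ∏ i, eC (2*Real.pi*(d i)*(((x i).val : ℤ))/p) := by
    apply Finset.sum_nbij' (fun γ => fun i => ((γ i : ZMod p)))
      (fun x => (hΓ (fun i => ((x i).val : ℤ))).choose)
    · intro γ _; exact Finset.mem_univ _
    · intro x _
      exact (hΓ (fun i => ((x i).val : ℤ))).choose_spec.1.1
    · intro γ hγ
      have hspec := (hΓ (fun i => (((γ i : ZMod p)).val : ℤ))).choose_spec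
      have hpred : γ ∈ Γ ∧ ∃ m : Fin n → ℤ,
          (fun i => (((γ i : ZMod p)).val : ℤ)) = γ + (p:ℤ) • m := by
        refine ⟨hγ, ?_⟩
        have hd : ∀ i, ∃ c : ℤ, (((γ i : ZMod p)).val : ℤ) = γ i + (p:ℤ) * c :=
          fun i => hmk _ _ (dvd_sub_comm.mp (val_congr p (γ i)))
        exact ⟨fun i => (hd i).choose, funext fun i => by
          simpa [Pi.add_apply] using (hd i).choose_spec⟩
      exact (hspec.2 γ hpred).symm
    · intro x _
      have hspec := (hΓ (fun i => ((x i).val : ℤ))).choose_spec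
      obtain ⟨m, hm⟩ := hspec.1.2
      funext i
      have hmi := congrFun hm i
      simp only [Pi.add_apply, Pi.smul_apply, smul_eq_mul] at hmi
      have : (((hΓ (fun i => ((x i).val : ℤ))).choose i : ℤ) : ZMod p) = (((x i).val : ℤ) : ZMod p) := by
        rw [hmi]; push_cast; simp
      rw [this]; push_cast; simp [ZMod.natCast_val]
    · intro γ hγ
      rw [eC_sum]
      exact Finset.prod_congr rfl (fun i _ => eC_div_period p hp (d i) _ _ (val_congr p (γ i)))
  rw [step1]
  have step2 : ∑ x : (Fin n → ZMod p), ∏ i, eC (2*Real.pi*(d i)*(((x i).val : ℤ))/p)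
      = ∏ i : Fin n, ∑ y : ZMod p, eC (2*Real.pi*(d i)*((y.val : ℤ))/p) := by
    rw [Finset.prod_univ_sum]
    rw [Fintype.piFinset_univ]
  rw [step2]
  have step3 : ∀ i : Fin n, ∑ y : ZMod p, eC (2*Real.pi*(d i)*((y.val : ℤ))/p)
      = if (p:ℤ) ∣ d i then (p:ℂ) else 0 := fun i => charZMod p hp (d i)
  rw [Finset.prod_congr rfl (fun i _ => step3 i)]
  by_cases hall : ∀ i, (p:ℤ) ∣ d i
  · rw [if_pos hall]
    rw [Finset.prod_congr rfl (fun i _ => if_pos (hall i))]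
    simp
  · rw [if_neg hall]
    push_neg at hall
    obtain ⟨i, hi⟩ := hall
    exact Finset.prod_eq_zero (Finset.mem_univ i) (if_neg hi)

theorem primeCosetSum_polyphase_connection
    (n : ℕ) (hn : 1 ≤ n) (p : ℕ) (hp : p.Prime)
    (Γ : Finset (Fin n → ℤ)) (hΓ0 : (0 : Fin n → ℤ) ∈ Γ)
    (hΓ : ∀ k : Fin n → ℤ, ∃! ν : Fin n → ℤ,
      ν ∈ Γ ∧ ∃ m : Fin n → ℤ, k = ν + (p : ℤ) • m)
    (Fp : Finset ℤ) (hFp0 : (0 : ℤ) ∈ Fp)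
    (hFp : ∀ k : ℤ, ∃! l : ℤ, l ∈ Fp ∧ ∃ m : ℤ, k = l + p * m)
    (ρ : ℤ → ℤ)
    (hρ : ∀ l ∈ Fp.erase 0, ρ l ∈ Fp.erase 0 ∧ (p : ℤ) ∣ (l * ρ l - 1))
    (η : ℤ → (Fin n → ℤ) → (Fin n → ℤ))
    (hη : ∀ l ∈ Fp.erase 0, ∀ ν ∈ Γ.erase 0,
      η l ν ∈ Γ.erase 0 ∧ ∀ i, (p : ℤ) ∣ (η l ν i - ρ l * ν i))
    (H : ℤ → ℝ) (hHfin : (Function.support H).Finite)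
    (hHlow : (1 / (p : ℝ)) * ∑ᶠ K : ℤ, H K = 1)
    (h : (Fin n → ℤ) → ℝ) (hhfin : (Function.support h).Finite)
    (hmask : ∀ ω : Fin n → ℝ,
      (1 / (p : ℂ) ^ n) * ∑ᶠ k : Fin n → ℤ, (h k : ℂ) * eC (∑ i, (k i : ℝ) * ω i) =
      (1 / (((p : ℂ) - 1) * (p : ℂ) ^ (n - 1))) *
        (1 - (p : ℂ) ^ (n - 1) +
          ∑ ν ∈ Γ.erase 0,
            (1 / (p : ℂ)) * ∑ᶠ K : ℤ, (H K : ℂ) * eC ((K : ℝ) * ∑ i, ω i * (ν i : ℝ)))) :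
    ∀ ν ∈ Γ.erase 0, ∀ ω : Fin n → ℝ,
      (1 / (p : ℂ) ^ n) *
          ∑ᶠ k : Fin n → ℤ, (h (ν + (p : ℤ) • k) : ℂ) * eC (∑ i, (k i : ℝ) * ((p : ℝ) * ω i)) =
      (1 / (((p : ℂ) - 1) * (p : ℂ) ^ (n - 1))) *
        ∑ l ∈ Fp.erase 0,
          epC (∑ i, ω i * ((ν i - η l ν i * l : ℤ) : ℝ)) *
            ((1 / (p : ℂ)) *
              ∑ᶠ m : ℤ, (H (l + p * m) : ℂ) * eC ((m : ℝ) * ((p : ℝ) * ∑ i, ω i * (η l ν i : ℝ)))) := by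
  intro ν hν ω
  have hp1 : 0 < p := hp.pos
  have hpR : (p:ℝ) ≠ 0 := by exact_mod_cast hp1.ne'
  have hpC : (p:ℂ) ≠ 0 := by exact_mod_cast hp1.ne'
  have hpZ : (p:ℤ) ≠ 0 := by exact_mod_cast hp1.ne'
  obtain ⟨hν0, hνΓ⟩ := Finset.mem_erase.1 hν
  -- ν is not divisible by p
  have pν : ¬ ∀ i, (p:ℤ) ∣ ν i := by
    intro hdvd
    apply hν0
    have h1 : ν ∈ Γ ∧ ∃ m : Fin n → ℤ, ν = ν + (p:ℤ) • m := ⟨hνΓ, 0, by simp⟩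
    have h2 : (0 : Fin n → ℤ) ∈ Γ ∧ ∃ m : Fin n → ℤ, ν = 0 + (p:ℤ) • m := by
      refine ⟨hΓ0, fun i => ν i / p, funext fun i => ?_⟩
      simp only [Pi.add_apply, Pi.smul_apply, Pi.zero_apply, smul_eq_mul, zero_add]
      exact (Int.mul_ediv_cancel' (hdvd i)).symm
    obtain ⟨w, hw1, hw2⟩ := hΓ ν
    rw [hw2 ν h1, hw2 0 h2]
  -- shifted frequencies
  set ωγ : (Fin n → ℤ) → (Fin n → ℝ) := fun γ i => ω i + 2*Real.pi*(γ i)/p with hωγ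
  set T : Finset (Fin n → ℤ) := hhfin.toFinset with hT
  set SH : Finset ℤ := hHfin.toFinset with hSH
  -- E1 : averaged LHS of the mask equals the goal LHS
  have E1 : (1 / (p:ℂ)^n) * ∑ γ ∈ Γ, epC (∑ i, ωγ γ i * (ν i : ℝ)) *
        ((1 / (p : ℂ) ^ n) * ∑ᶠ k : Fin n → ℤ, (h k : ℂ) * eC (∑ i, (k i : ℝ) * ωγ γ i)) =
      (1 / (p : ℂ) ^ n) *
        ∑ᶠ k : Fin n → ℤ, (h (ν + (p : ℤ) • k) : ℂ) * eC (∑ i, (k i : ℝ) * ((p : ℝ) * ω i)) := by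
    have hin : ∀ γ : Fin n → ℤ, (∑ᶠ k : Fin n → ℤ, (h k : ℂ) * eC (∑ i, (k i : ℝ) * ωγ γ i))
        = ∑ k ∈ T, (h k : ℂ) * eC (∑ i, (k i : ℝ) * ωγ γ i) := by
      intro γ
      apply finsum_eq_finset_sum_of_support_subset
      intro k hk
      simp only [Function.mem_support, ne_eq] at hk
      have hk0 : h k ≠ 0 := fun h0 => hk (by simp [h0])
      simpa [hT] using hk0
    simp only [hin]
    have c1 : ∀ γ ∈ Γ, epC (∑ i, ωγ γ i * (ν i : ℝ)) *
        ((1 / (p:ℂ)^n) * ∑ k ∈ T, (h k : ℂ) * eC (∑ i, (k i : ℝ) * ωγ γ i)) =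
        (1 / (p:ℂ)^n) * ∑ k ∈ T,
          ((h k : ℂ) * eC (∑ i, ((k i - ν i : ℤ) : ℝ) * ω i)) *
            eC (∑ i, 2*Real.pi*((k i - ν i : ℤ))*(γ i)/p) := by
      intro γ _
      rw [mul_left_comm]
      congr 1
      rw [Finset.mul_sum]
      refine Finset.sum_congr rfl (fun k _ => ?_)
      rw [mul_left_comm, epC_mul_eC]
      have harg : (∑ i, (k i : ℝ) * ωγ γ i) - (∑ i, ωγ γ i * (ν i : ℝ))
          = (∑ i, ((k i - ν i : ℤ) : ℝ) * ω i) + ∑ i, 2*Real.pi*(((k i - ν i : ℤ)):ℝ)*(γ i)/p := by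
        rw [← Finset.sum_sub_distrib, ← Finset.sum_add_distrib]
        refine Finset.sum_congr rfl (fun i _ => ?_)
        simp only [hωγ]
        push_cast
        field_simp
      rw [harg, eC_add]
      ring
    rw [Finset.sum_congr rfl c1, ← Finset.mul_sum, Finset.sum_comm]
    have c2 : ∀ k ∈ T, ∑ γ ∈ Γ, ((h k : ℂ) * eC (∑ i, ((k i - ν i : ℤ) : ℝ) * ω i)) *
          eC (∑ i, 2*Real.pi*((k i - ν i : ℤ))*(γ i)/p)
        = ((h k : ℂ) * eC (∑ i, ((k i - ν i : ℤ) : ℝ) * ω i)) *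
          (if (∀ i, (p:ℤ) ∣ (k i - ν i)) then ((p:ℂ))^n else 0) := by
      intro k _
      rw [← Finset.mul_sum]
      congr 1
      exact charGamma n p hp1 Γ hΓ (fun i => k i - ν i)
    rw [Finset.sum_congr rfl c2]
    have c3 : ∑ k ∈ T, ((h k : ℂ) * eC (∑ i, ((k i - ν i : ℤ) : ℝ) * ω i)) *
          (if (∀ i, (p:ℤ) ∣ (k i - ν i)) then ((p:ℂ))^n else 0)
        = ((p:ℂ))^n * ∑ k ∈ T.filter (fun k => ∀ i, (p:ℤ) ∣ (k i - ν i)),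
            (h k : ℂ) * eC (∑ i, ((k i - ν i : ℤ) : ℝ) * ω i) := by
      rw [Finset.mul_sum, Finset.sum_filter]
      refine Finset.sum_congr rfl (fun k _ => ?_)
      by_cases hc : ∀ i, (p:ℤ) ∣ (k i - ν i) <;> simp [hc] <;> ring
    rw [c3]
    have hsub : (Function.support fun m : Fin n → ℤ => (h (ν + (p : ℤ) • m) : ℂ) *
          eC (∑ i, (m i : ℝ) * ((p : ℝ) * ω i))) ⊆
        (((T.filter (fun k => ∀ i, (p:ℤ) ∣ (k i - ν i))).image
          (fun k => fun i => (k i - ν i) / p) : Finset (Fin n → ℤ)) : Set (Fin n → ℤ)) := by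
      intro m hm
      simp only [Function.mem_support, ne_eq] at hm
      have hm0 : h (ν + (p:ℤ) • m) ≠ 0 := fun h0 => hm (by rw [h0]; simp)
      simp only [Finset.coe_image, Set.mem_image, Finset.mem_coe, Finset.mem_filter]
      refine ⟨ν + (p:ℤ) • m, ⟨by simpa [hT] using hm0,
        fun i => ⟨m i, by simp only [Pi.add_apply, Pi.smul_apply, smul_eq_mul]; ring⟩⟩, ?_⟩
      funext i
      simp only [Pi.add_apply, Pi.smul_apply, smul_eq_mul]
      rw [add_sub_cancel_left]
      exact Int.mul_ediv_cancel_left _ hpZ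
    rw [finsum_eq_finset_sum_of_support_subset _ hsub]
    have c4 : ∑ m ∈ (T.filter (fun k => ∀ i, (p:ℤ) ∣ (k i - ν i))).image
          (fun k => fun i => (k i - ν i) / p),
        (h (ν + (p : ℤ) • m) : ℂ) * eC (∑ i, (m i : ℝ) * ((p : ℝ) * ω i))
        = ∑ k ∈ T.filter (fun k => ∀ i, (p:ℤ) ∣ (k i - ν i)),
            (h k : ℂ) * eC (∑ i, ((k i - ν i : ℤ) : ℝ) * ω i) := by
      have hback : ∀ k ∈ T.filter (fun k => ∀ i, (p:ℤ) ∣ (k i - ν i)),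
          ν + (p:ℤ) • (fun i => (k i - ν i) / p) = k := by
        intro k hk
        obtain ⟨-, hkc⟩ := Finset.mem_filter.1 hk
        funext i
        simp only [Pi.add_apply, Pi.smul_apply, smul_eq_mul]
        rw [Int.mul_ediv_cancel' (hkc i)]
        ring
      apply Finset.sum_nbij' (fun m => ν + (p:ℤ) • m) (fun k => fun i => (k i - ν i) / p)
      · intro m hm
        obtain ⟨k, hk, rfl⟩ := Finset.mem_image.1 hm
        rw [hback k hk]
        exact hk
      · intro k hk
        exact Finset.mem_image.2 ⟨k, hk, rfl⟩
      · intro m hm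
        funext i
        simp only [Pi.add_apply, Pi.smul_apply, smul_eq_mul]
        rw [add_sub_cancel_left]
        exact Int.mul_ediv_cancel_left _ hpZ
      · intro k hk
        exact hback k hk
      · intro m hm
        have harg : (∑ i, (m i : ℝ) * ((p:ℝ) * ω i))
            = ∑ i, (((ν + (p:ℤ) • m) i - ν i : ℤ) : ℝ) * ω i := by
          refine Finset.sum_congr rfl (fun i _ => ?_)
          simp only [Pi.add_apply, Pi.smul_apply, smul_eq_mul]
          push_cast
          ring
        rw [harg]
    rw [c4]
    rw [← mul_assoc, ← mul_assoc]
    congr 1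
    field_simp
  -- uniqueness of representatives in Γ
  have hΓuniq : ∀ a b : Fin n → ℤ, a ∈ Γ → b ∈ Γ → (∀ i, (p:ℤ) ∣ (a i - b i)) → a = b := by
    intro a b ha hb hab
    obtain ⟨w, hw1, hw2⟩ := hΓ a
    have h1 : a = w := hw2 a ⟨ha, 0, by simp⟩
    have h2 : b = w := hw2 b ⟨hb, fun i => (a i - b i)/p, funext fun i => by
      simp only [Pi.add_apply, Pi.smul_apply, smul_eq_mul]
      rw [Int.mul_ediv_cancel' (hab i)]
      ring⟩
    rw [h1, h2]
  -- the residue map to Fp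
  set r : ℤ → ℤ := fun K => (hFp K).choose with hrdef
  have hrmem : ∀ K : ℤ, r K ∈ Fp := fun K => (hFp K).choose_spec.1.1
  have hrdvd : ∀ K : ℤ, (p:ℤ) ∣ (K - r K) := by
    intro K
    obtain ⟨m, hm⟩ := (hFp K).choose_spec.1.2
    exact ⟨m, by show K - (hFp K).choose = (p:ℤ)*m; omega⟩
  have hruniq : ∀ K l : ℤ, l ∈ Fp → (p:ℤ) ∣ (K - l) → l = r K := by
    intro K l hl hdl
    obtain ⟨m, hm⟩ := hdl
    exact (hFp K).choose_spec.2 l ⟨hl, m, by omega⟩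
  -- key fact 1: forward direction of the (ν',K) ↔ (l,K) correspondence
  have hkey1 : ∀ ν' ∈ Γ.erase 0, ∀ K : ℤ, (∀ i, (p:ℤ) ∣ (K * ν' i - ν i)) →
      r K ∈ Fp.erase 0 ∧ η (r K) ν = ν' := by
    intro ν' hν' K hKν'
    obtain ⟨hν'0, hν'Γ⟩ := Finset.mem_erase.1 hν'
    have hr0 : r K ≠ 0 := by
      intro hr0
      apply pν
      intro i
      have hpK : (p:ℤ) ∣ K := by
        have := hrdvd K
        rw [hr0] at this
        simpa using this
      have : ν i = K * ν' i - (K * ν' i - ν i) := by ring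
      rw [this]
      exact dvd_sub (hpK.mul_right _) (hKν' i)
    have hrFp' : r K ∈ Fp.erase 0 := Finset.mem_erase.2 ⟨hr0, hrmem K⟩
    refine ⟨hrFp', ?_⟩
    obtain ⟨hηmem, hηdvd⟩ := hη (r K) hrFp' ν hν
    obtain ⟨hρmem, hρdvd⟩ := hρ (r K) hrFp'
    refine hΓuniq _ _ (Finset.mem_erase.1 hηmem).2 hν'Γ (fun i => ?_)
    have hiden : η (r K) ν i - ν' i =
        (η (r K) ν i - ρ (r K) * ν i) + ρ (r K) * (ν i - K * ν' i)
          + (ρ (r K) * (K - r K) + (r K * ρ (r K) - 1)) * ν' i := by ring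
    rw [hiden]
    refine dvd_add (dvd_add (hηdvd i) (Dvd.dvd.mul_left ?_ _)) (Dvd.dvd.mul_right ?_ _)
    · have := hKν' i
      have hiden2 : ν i - K * ν' i = -(K * ν' i - ν i) := by ring
      rw [hiden2]
      exact this.neg_right
    · exact dvd_add ((hrdvd K).mul_left _) hρdvd
  -- key fact 2: backward direction
  have hkey2 : ∀ l ∈ Fp.erase 0, ∀ K : ℤ, (p:ℤ) ∣ (K - l) →
      (∀ i, (p:ℤ) ∣ (K * η l ν i - ν i)) := by
    intro l hl K hKl i
    obtain ⟨hηmem, hηdvd⟩ := hη l hl ν hν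
    obtain ⟨hρmem, hρdvd⟩ := hρ l hl
    have hiden : K * η l ν i - ν i =
        (K - l) * η l ν i + l * (η l ν i - ρ l * ν i) + (l * ρ l - 1) * ν i := by ring
    rw [hiden]
    exact dvd_add (dvd_add (hKl.mul_right _) (Dvd.dvd.mul_left (hηdvd i) _))
      (Dvd.dvd.mul_right hρdvd _)
  have E2 : (1 / (p:ℂ)^n) * ∑ γ ∈ Γ, epC (∑ i, ωγ γ i * (ν i : ℝ)) *
        ((1 / (((p : ℂ) - 1) * (p : ℂ) ^ (n - 1))) *
          (1 - (p : ℂ) ^ (n - 1) +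
            ∑ ν' ∈ Γ.erase 0,
              (1 / (p : ℂ)) * ∑ᶠ K : ℤ, (H K : ℂ) * eC ((K : ℝ) * ∑ i, ωγ γ i * (ν' i : ℝ)))) =
      (1 / (((p : ℂ) - 1) * (p : ℂ) ^ (n - 1))) *
        ∑ l ∈ Fp.erase 0,
          epC (∑ i, ω i * ((ν i - η l ν i * l : ℤ) : ℝ)) *
            ((1 / (p : ℂ)) *
              ∑ᶠ m : ℤ, (H (l + p * m) : ℂ) * eC ((m : ℝ) * ((p : ℝ) * ∑ i, ω i * (η l ν i : ℝ)))) := by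
    have hinH : ∀ x : ℝ, (∑ᶠ K : ℤ, (H K : ℂ) * eC ((K : ℝ) * x))
        = ∑ K ∈ SH, (H K:ℂ) * eC ((K:ℝ)*x) := by
      intro x
      apply finsum_eq_finset_sum_of_support_subset
      intro K hK
      simp only [Function.mem_support, ne_eq] at hK
      have hK0 : H K ≠ 0 := fun h0 => hK (by rw [h0]; simp)
      simpa [hSH] using hK0
    simp only [hinH]
    -- the constant term averages to zero
    have part1 : ∑ γ ∈ Γ, epC (∑ i, ωγ γ i * (ν i : ℝ)) = 0 := by
      have hsplit : ∀ γ : Fin n → ℤ, epC (∑ i, ωγ γ i * (ν i:ℝ))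
          = eC (-(∑ i, ω i * (ν i:ℝ))) * eC (∑ i, 2*Real.pi*((-(ν i) : ℤ))*(γ i)/p) := by
        intro γ
        rw [epC_eq, ← eC_add]
        congr 1
        have key : (∑ i, ωγ γ i * (ν i:ℝ))
            = (∑ i, ω i * (ν i:ℝ)) + ∑ i, (2*Real.pi*(((ν i) : ℤ):ℝ)*(γ i)/p) := by
          rw [← Finset.sum_add_distrib]
          refine Finset.sum_congr rfl fun i _ => ?_
          simp only [hωγ]; push_cast; field_simp
        have h3 : ∑ i, 2*Real.pi*(((-(ν i) : ℤ)):ℝ)*(γ i)/p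
            = -∑ i, (2*Real.pi*(((ν i) : ℤ):ℝ)*(γ i)/p) := by
          rw [← Finset.sum_neg_distrib]
          exact Finset.sum_congr rfl fun i _ => by push_cast; ring
        rw [key, h3]; ring
      calc ∑ γ ∈ Γ, epC (∑ i, ωγ γ i * (ν i:ℝ))
          = eC (-(∑ i, ω i * (ν i:ℝ))) *
              ∑ γ ∈ Γ, eC (∑ i, 2*Real.pi*((-(ν i) : ℤ))*(γ i)/p) := by
            rw [Finset.mul_sum]
            exact Finset.sum_congr rfl fun γ _ => hsplit γ
        _ = eC (-(∑ i, ω i * (ν i:ℝ))) *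
              (if (∀ i, (p:ℤ) ∣ (-(ν i))) then ((p:ℂ))^n else 0) := by
            congr 1
            exact charGamma n p hp1 Γ hΓ (fun i => -(ν i))
        _ = 0 := by
            rw [if_neg (fun hall => pν (fun i => dvd_neg.mp (hall i))), mul_zero]
    -- per-γ expansion of the weighted mask right-hand side
    have c1 : ∀ γ ∈ Γ, epC (∑ i, ωγ γ i * (ν i : ℝ)) *
        ((1 / (((p:ℂ) - 1) * (p:ℂ)^(n-1))) * (1 - (p:ℂ)^(n-1) +
          ∑ ν' ∈ Γ.erase 0, (1/(p:ℂ)) *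
            ∑ K ∈ SH, (H K : ℂ) * eC ((K:ℝ) * ∑ i, ωγ γ i * (ν' i : ℝ))))
        = (1 / (((p:ℂ) - 1) * (p:ℂ)^(n-1))) *
          ((1 - (p:ℂ)^(n-1)) * epC (∑ i, ωγ γ i * (ν i : ℝ)) +
           (1/(p:ℂ)) * ∑ ν' ∈ Γ.erase 0, ∑ K ∈ SH,
             ((H K : ℂ) * eC (∑ i, ((K * ν' i - ν i : ℤ):ℝ) * ω i)) *
               eC (∑ i, 2*Real.pi*((K * ν' i - ν i : ℤ))*(γ i)/p)) := by
      intro γ _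
      have hS : epC (∑ i, ωγ γ i * (ν i : ℝ)) *
          (∑ ν' ∈ Γ.erase 0, (1/(p:ℂ)) *
            ∑ K ∈ SH, (H K : ℂ) * eC ((K:ℝ) * ∑ i, ωγ γ i * (ν' i : ℝ)))
          = (1/(p:ℂ)) * ∑ ν' ∈ Γ.erase 0, ∑ K ∈ SH,
              ((H K:ℂ) * eC (∑ i, ((K * ν' i - ν i : ℤ):ℝ) * ω i)) *
                eC (∑ i, 2*Real.pi*((K * ν' i - ν i : ℤ))*(γ i)/p) := by
        rw [Finset.mul_sum, Finset.mul_sum]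
        refine Finset.sum_congr rfl (fun ν' _ => ?_)
        rw [mul_left_comm]
        congr 1
        rw [Finset.mul_sum]
        refine Finset.sum_congr rfl (fun K _ => ?_)
        rw [mul_left_comm, epC_mul_eC]
        have harg : ((K:ℝ) * ∑ i, ωγ γ i * (ν' i:ℝ)) - (∑ i, ωγ γ i * (ν i:ℝ))
            = (∑ i, ((K * ν' i - ν i : ℤ):ℝ) * ω i)
              + ∑ i, 2*Real.pi*(((K * ν' i - ν i : ℤ)):ℝ)*(γ i)/p := by
          rw [Finset.mul_sum, ← Finset.sum_sub_distrib, ← Finset.sum_add_distrib]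
          refine Finset.sum_congr rfl (fun i _ => ?_)
          simp only [hωγ]
          push_cast
          field_simp
        rw [harg, eC_add]
        ring
      calc epC (∑ i, ωγ γ i * (ν i : ℝ)) *
          ((1 / (((p:ℂ) - 1) * (p:ℂ)^(n-1))) * (1 - (p:ℂ)^(n-1) +
            ∑ ν' ∈ Γ.erase 0, (1/(p:ℂ)) *
              ∑ K ∈ SH, (H K : ℂ) * eC ((K:ℝ) * ∑ i, ωγ γ i * (ν' i : ℝ))))
          = (1 / (((p:ℂ) - 1) * (p:ℂ)^(n-1))) *
            ((1 - (p:ℂ)^(n-1)) * epC (∑ i, ωγ γ i * (ν i : ℝ)) +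
              epC (∑ i, ωγ γ i * (ν i : ℝ)) *
                (∑ ν' ∈ Γ.erase 0, (1/(p:ℂ)) *
                  ∑ K ∈ SH, (H K : ℂ) * eC ((K:ℝ) * ∑ i, ωγ γ i * (ν' i : ℝ)))) := by
            ring
        _ = _ := by rw [hS]
    rw [Finset.sum_congr rfl c1, ← Finset.mul_sum, Finset.sum_add_distrib,
      ← Finset.mul_sum, ← Finset.mul_sum, part1, mul_zero, zero_add]
    -- evaluate the γ-average of the main term
    have part2 : ∑ γ ∈ Γ, ∑ ν' ∈ Γ.erase 0, ∑ K ∈ SH,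
          ((H K:ℂ) * eC (∑ i, ((K * ν' i - ν i : ℤ):ℝ) * ω i)) *
            eC (∑ i, 2*Real.pi*((K * ν' i - ν i : ℤ))*(γ i)/p)
        = (p:ℂ)^n * ∑ ν' ∈ Γ.erase 0,
            ∑ K ∈ SH.filter (fun K => ∀ i, (p:ℤ) ∣ (K * ν' i - ν i)),
              (H K:ℂ) * eC (∑ i, ((K * ν' i - ν i : ℤ):ℝ) * ω i) := by
      rw [Finset.sum_comm, Finset.mul_sum]
      refine Finset.sum_congr rfl (fun ν' _ => ?_)
      rw [Finset.sum_comm]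
      have hK : ∀ K ∈ SH, ∑ γ ∈ Γ,
            ((H K:ℂ) * eC (∑ i, ((K * ν' i - ν i : ℤ):ℝ) * ω i)) *
              eC (∑ i, 2*Real.pi*((K * ν' i - ν i : ℤ))*(γ i)/p)
          = ((H K:ℂ) * eC (∑ i, ((K * ν' i - ν i : ℤ):ℝ) * ω i)) *
              (if (∀ i, (p:ℤ) ∣ (K * ν' i - ν i)) then ((p:ℂ))^n else 0) := by
        intro K _
        rw [← Finset.mul_sum]
        congr 1
        exact charGamma n p hp1 Γ hΓ (fun i => K * ν' i - ν i)
      rw [Finset.sum_congr rfl hK, Finset.mul_sum, Finset.sum_filter]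
      refine Finset.sum_congr rfl (fun K _ => ?_)
      by_cases hc : ∀ i, (p:ℤ) ∣ (K * ν' i - ν i) <;> simp [hc] <;> ring
    rw [part2]
    -- rewrite the right-hand side of the goal
    have cR : ∀ l ∈ Fp.erase 0, epC (∑ i, ω i * ((ν i - η l ν i * l : ℤ) : ℝ)) *
        ((1 / (p : ℂ)) *
          ∑ᶠ m : ℤ, (H (l + p * m) : ℂ) * eC ((m : ℝ) * ((p : ℝ) * ∑ i, ω i * (η l ν i : ℝ))))
        = (1/(p:ℂ)) * ∑ K ∈ SH.filter (fun K => (p:ℤ) ∣ (K - l)),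
            (H K : ℂ) * eC (∑ i, ((K * η l ν i - ν i : ℤ):ℝ) * ω i) := by
      intro l hl
      have hsub : (Function.support fun m : ℤ => (H (l + p * m) : ℂ) *
            eC ((m : ℝ) * ((p : ℝ) * ∑ i, ω i * (η l ν i : ℝ)))) ⊆
          (((SH.filter (fun K => (p:ℤ) ∣ (K - l))).image (fun K => (K - l)/p) :
            Finset ℤ) : Set ℤ) := by
        intro m hm
        simp only [Function.mem_support, ne_eq] at hm
        have hm0 : H (l + p * m) ≠ 0 := fun h0 => hm (by rw [h0]; simp)
        simp only [Finset.coe_image, Set.mem_image, Finset.mem_coe, Finset.mem_filter]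
        refine ⟨l + p * m, ⟨by simpa [hSH] using hm0, ⟨m, by ring⟩⟩, ?_⟩
        rw [add_sub_cancel_left]
        exact Int.mul_ediv_cancel_left _ hpZ
      rw [finsum_eq_finset_sum_of_support_subset _ hsub]
      rw [mul_left_comm]
      congr 1
      rw [Finset.mul_sum]
      have hback : ∀ K ∈ SH.filter (fun K => (p:ℤ) ∣ (K - l)), l + (p:ℤ) * ((K - l)/p) = K := by
        intro K hK
        obtain ⟨-, hKc⟩ := Finset.mem_filter.1 hK
        rw [Int.mul_ediv_cancel' hKc]
        ring
      apply Finset.sum_nbij' (fun m => l + (p:ℤ) * m) (fun K => (K - l)/p)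
      · intro m hm
        obtain ⟨K, hK, rfl⟩ := Finset.mem_image.1 hm
        rw [hback K hK]
        exact hK
      · intro K hK
        exact Finset.mem_image.2 ⟨K, hK, rfl⟩
      · intro m hm
        rw [add_sub_cancel_left]
        exact Int.mul_ediv_cancel_left _ hpZ
      · intro K hK
        exact hback K hK
      · intro m hm
        rw [mul_left_comm, epC_mul_eC]
        have harg : ((m:ℝ) * ((p:ℝ) * ∑ i, ω i * (η l ν i : ℝ)))
              - (∑ i, ω i * ((ν i - η l ν i * l : ℤ) : ℝ))
            = ∑ i, (((l + (p:ℤ)*m) * η l ν i - ν i : ℤ):ℝ) * ω i := by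
          rw [Finset.mul_sum, Finset.mul_sum, ← Finset.sum_sub_distrib]
          refine Finset.sum_congr rfl (fun i _ => ?_)
          push_cast
          ring
        rw [harg]
    rw [Finset.sum_congr rfl cR, ← Finset.mul_sum]
    -- the sigma bijection between (ν',K) pairs and (l,K) pairs
    have hSS12 : ∑ ν' ∈ Γ.erase 0,
          ∑ K ∈ SH.filter (fun K => ∀ i, (p:ℤ) ∣ (K * ν' i - ν i)),
            (H K:ℂ) * eC (∑ i, ((K * ν' i - ν i : ℤ):ℝ) * ω i)
        = ∑ l ∈ Fp.erase 0, ∑ K ∈ SH.filter (fun K => (p:ℤ) ∣ (K - l)),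
            (H K : ℂ) * eC (∑ i, ((K * η l ν i - ν i : ℤ):ℝ) * ω i) := by
      rw [Finset.sum_sigma', Finset.sum_sigma']
      apply Finset.sum_nbij' (fun x => (⟨r x.2, x.2⟩ : (_ : ℤ) × ℤ))
        (fun y => (⟨η y.1 ν, y.2⟩ : (_ : Fin n → ℤ) × ℤ))
      · rintro ⟨ν', K⟩ hx
        obtain ⟨hν', hK⟩ := Finset.mem_sigma.1 hx
        obtain ⟨hKSH, hKc⟩ := Finset.mem_filter.1 hK
        obtain ⟨hrFp', hην'⟩ := hkey1 ν' hν' K hKc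
        refine Finset.mem_sigma.2 ⟨hrFp', Finset.mem_filter.2 ⟨hKSH, hrdvd K⟩⟩
      · rintro ⟨l, K⟩ hy
        obtain ⟨hl, hK⟩ := Finset.mem_sigma.1 hy
        obtain ⟨hKSH, hKc⟩ := Finset.mem_filter.1 hK
        refine Finset.mem_sigma.2 ⟨(hη l hl ν hν).1, Finset.mem_filter.2 ⟨hKSH, hkey2 l hl K hKc⟩⟩
      · rintro ⟨ν', K⟩ hx
        obtain ⟨hν', hK⟩ := Finset.mem_sigma.1 hx
        obtain ⟨hKSH, hKc⟩ := Finset.mem_filter.1 hK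
        obtain ⟨hrFp', hην'⟩ := hkey1 ν' hν' K hKc
        simp only [Sigma.mk.inj_iff]
        exact ⟨by rw [hην'], HEq.rfl⟩
      · rintro ⟨l, K⟩ hy
        obtain ⟨hl, hK⟩ := Finset.mem_sigma.1 hy
        obtain ⟨hKSH, hKc⟩ := Finset.mem_filter.1 hK
        simp only [Sigma.mk.inj_iff]
        exact ⟨by rw [← hruniq K l (Finset.mem_erase.1 hl).2 hKc], HEq.rfl⟩
      · rintro ⟨ν', K⟩ hx
        obtain ⟨hν', hK⟩ := Finset.mem_sigma.1 hx
        obtain ⟨hKSH, hKc⟩ := Finset.mem_filter.1 hK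
        obtain ⟨hrFp', hην'⟩ := hkey1 ν' hν' K hKc
        simp only
        rw [hην']
    rw [hSS12]
    field_simp
  rw [← E1, ← E2]
  congr 1
  refine Finset.sum_congr rfl (fun γ _ => ?_)
  rw [hmask (ωγ γ)]
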